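/- Let Γ=(G,σ) be a signed graph on n vertices. For 1≤k≤n let L_k (respectively L'_k) be the cut-off adjacency eigenvalues of Γ computed with edge weight and vertex measure (w,μ) (respectively (w',μ')), where w,w':E→(0,∞) and μ,μ':V→(0,∞) are arbitrary. Then #{k∈{1,…,n} : L_k=0} = #{k∈{1,…,n} : L'_k=0}. -/

import Mathlib

open Filter Topology Polynomial
open scoped Classical

noncomputable section

variable {V : Type} [Fintype V] [DecidableEq V]

/-- Sum of a (symmetric) summand over the unordered edges of `G`. -/
def sgEdgeSum (G : SimpleGraph V) (F : V → V → ℝ) : ℝ :=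
  (∑ i : V, ∑ j : V, if G.Adj i j then F i j else 0) / 2

/-- The Rayleigh quotient `R_p^σ` of the signed graph `p`-Laplacian with
edge weight `w`, signature `sgn`, vertex measure `μ` and potential `κ`. -/
def sgRayleigh (G : SimpleGraph V) (w sgn : V → V → ℝ) (μ κ : V → ℝ)
    (p : ℝ) (f : V → ℝ) : ℝ :=
  (sgEdgeSum G (fun i j => w i j * |f i - sgn i j * f j| ^ p) +
      ∑ i : V, κ i * |f i| ^ p) /
    ∑ i : V, μ i * |f i| ^ p

/-- The unit sphere `S_p` of `ℓ^p(μ)`. -/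
def pSphere (μ : V → ℝ) (p : ℝ) : Set (V → ℝ) :=
  {f | ∑ i : V, μ i * |f i| ^ p = 1}

/-- There is an odd continuous map from `B` into `ℝ^m ∖ {0}`. -/
def hasOddMapInto (B : Set (V → ℝ)) (m : ℕ) : Prop :=
  ∃ h : (V → ℝ) → (Fin m → ℝ),
    ContinuousOn h B ∧ (∀ x ∈ B, h x ≠ 0) ∧ (∀ x ∈ B, h (-x) = -(h x))

/-- The Krasnoselskii genus of `B` is at least `k`. -/
def genusGe (B : Set (V → ℝ)) (k : ℕ) : Prop :=
  ∀ m, m < k → ¬ hasOddMapInto B m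

/-- The family `F_k(S_p)` of closed symmetric subsets of the sphere `S_p`
with Krasnoselskii genus at least `k`. -/
def genusFamily (μ : V → ℝ) (p : ℝ) (k : ℕ) : Set (Set (V → ℝ)) :=
  {B | B ⊆ pSphere μ p ∧ IsClosed B ∧ (∀ x ∈ B, -x ∈ B) ∧ genusGe B k}

/-- The `k`-th variational eigenvalue `λ_k^{(p)}` of the signed graph `p`-Laplacian. -/
def varEig (G : SimpleGraph V) (w sgn : V → V → ℝ) (μ κ : V → ℝ)
    (p : ℝ) (k : ℕ) : ℝ :=
  sInf ((fun B => sSup (sgRayleigh G w sgn μ κ p '' B)) '' genusFamily μ p k)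

/-- The `k`-th smallest real root (1-indexed, counted with multiplicity) of the
characteristic polynomial of `A`; for a matrix with real spectrum this is the
`k`-th eigenvalue `λ_k(A)` in the ordering `λ_1 ≤ … ≤ λ_n`. -/
def eigval {m : Type} [Fintype m] [DecidableEq m] (A : Matrix m m ℝ) (k : ℕ) : ℝ :=
  (Multiset.sort A.charpoly.roots (· ≤ ·)).getD (k - 1) 0

/-- The normalized adjacency matrix `A^μ_{-Γ}` of the negation of the signed graph
`(H, sgn)` with edge weight `w` and vertex measure `μ`. -/
def negAdj (H : SimpleGraph V) (w sgn : V → V → ℝ) (μ : V → ℝ) : Matrix V V ℝ :=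
  fun i j => if H.Adj i j then -(sgn i j) * w i j / μ i else 0

/-- The normalized adjacency matrix `A^μ_{-Γ₀}` of the negation of the subgraph of
`(H, sgn)` with vertex set `s`, with restricted edge weight and vertex measure. -/
def negAdjSub (H : SimpleGraph V) (s : Finset V) (w sgn : V → V → ℝ) (μ : V → ℝ) :
    Matrix {x // x ∈ s} {x // x ∈ s} ℝ :=
  fun i j => if H.Adj ↑i ↑j then -(sgn ↑i ↑j) * w ↑i ↑j / μ ↑i else 0

/-- The subgraph of `G` induced on the vertex set `s`. -/
def inducedGraph (G : SimpleGraph V) (s : Finset V) : SimpleGraph {x // x ∈ s} where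
  Adj i j := G.Adj ↑i ↑j
  symm := ⟨fun _ _ h => G.adj_symm h⟩
  loopless := ⟨fun i h => G.irrefl h⟩

/-- `G` has an edge cover of cardinality `m`. -/
def edgeCoverCard {α : Type} (G : SimpleGraph α) (m : ℕ) : Prop :=
  ∃ C : Finset (Sym2 α), (C : Set (Sym2 α)) ⊆ G.edgeSet ∧
    (∀ v : α, ∃ e ∈ C, v ∈ e) ∧ C.card = m

-- ==================== auxiliary lemmas ====================

lemma sgEdgeSum_nonneg {G : SimpleGraph V} {F : V → V → ℝ}
    (h : ∀ i j, G.Adj i j → 0 ≤ F i j) : 0 ≤ sgEdgeSum G F := by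
  unfold sgEdgeSum
  apply div_nonneg _ (by norm_num)
  refine Finset.sum_nonneg fun i _ => Finset.sum_nonneg fun j _ => ?_
  split_ifs with hij
  · exact h i j hij
  · exact le_rfl

lemma sgEdgeSum_mono {G : SimpleGraph V} {F F' : V → V → ℝ}
    (h : ∀ i j, G.Adj i j → F i j ≤ F' i j) : sgEdgeSum G F ≤ sgEdgeSum G F' := by
  unfold sgEdgeSum
  have hs : (∑ i : V, ∑ j : V, if G.Adj i j then F i j else 0)
      ≤ ∑ i : V, ∑ j : V, if G.Adj i j then F' i j else 0 := by
    refine Finset.sum_le_sum fun i _ => Finset.sum_le_sum fun j _ => ?_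
    split_ifs with hij
    · exact h i j hij
    · exact le_rfl
  linarith

lemma sgEdgeSum_const_mul {G : SimpleGraph V} {F : V → V → ℝ} (c : ℝ) :
    sgEdgeSum G (fun i j => c * F i j) = c * sgEdgeSum G F := by
  unfold sgEdgeSum
  rw [← mul_div_assoc]
  congr 1
  rw [Finset.mul_sum]
  refine Finset.sum_congr rfl fun i _ => ?_
  rw [Finset.mul_sum]
  refine Finset.sum_congr rfl fun j _ => ?_
  split_ifs <;> simp

lemma nonempty_of_genusGe {B : Set (V → ℝ)} {k : ℕ} (h : genusGe B k) (hk : 1 ≤ k) :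
    B.Nonempty := by
  by_contra hne
  rw [Set.not_nonempty_iff_eq_empty] at hne
  subst hne
  exact h 0 hk ⟨fun _ _ => 0, continuousOn_empty _, fun x hx => absurd hx (Set.notMem_empty x),
    fun x hx => absurd hx (Set.notMem_empty x)⟩

lemma sphere_denom_pos {μ μ₂ : V → ℝ} {p : ℝ} {f : V → ℝ}
    (hμ₂ : ∀ i, 0 < μ₂ i) (hf : f ∈ pSphere μ p) :
    0 < ∑ i : V, μ₂ i * |f i| ^ p := by
  have hf' : ∑ i : V, μ i * |f i| ^ p = 1 := hf
  have : ∃ i : V, μ i * |f i| ^ p ≠ 0 := by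
    by_contra hc
    push_neg at hc
    rw [Finset.sum_congr rfl (fun i _ => hc i)] at hf'
    simp at hf'
  obtain ⟨i, hi⟩ := this
  have hXi : 0 < |f i| ^ p := by
    rcases lt_or_eq_of_le (Real.rpow_nonneg (abs_nonneg (f i)) p) with h | h
    · exact h
    · exact absurd (by rw [← h, mul_zero]) hi
  refine Finset.sum_pos' (fun j _ => mul_nonneg (hμ₂ j).le (Real.rpow_nonneg (abs_nonneg _) _))
    ⟨i, Finset.mem_univ i, mul_pos (hμ₂ i) hXi⟩

lemma sgRayleigh_smul {G : SimpleGraph V} {w sgn : V → V → ℝ} {μ κ : V → ℝ} {p : ℝ}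
    {c : ℝ} (hc : c ≠ 0) (f : V → ℝ) :
    sgRayleigh G w sgn μ κ p (c • f) = sgRayleigh G w sgn μ κ p f := by
  have habs : ∀ x : ℝ, |c * x| ^ p = |c| ^ p * |x| ^ p := fun x => by
    rw [abs_mul, Real.mul_rpow (abs_nonneg _) (abs_nonneg _)]
  have hcp : |c| ^ p ≠ 0 := (Real.rpow_pos_of_pos (abs_pos.mpr hc) p).ne'
  unfold sgRayleigh
  have h1 : sgEdgeSum G (fun i j => w i j * |(c • f) i - sgn i j * (c • f) j| ^ p)
      = |c| ^ p * sgEdgeSum G (fun i j => w i j * |f i - sgn i j * f j| ^ p) := by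
    rw [← sgEdgeSum_const_mul]
    congr 1
    funext i j
    have : (c • f) i - sgn i j * (c • f) j = c * (f i - sgn i j * f j) := by
      simp [Pi.smul_apply, smul_eq_mul]; ring
    rw [this, habs]; ring
  have h2 : ∑ i : V, κ i * |(c • f) i| ^ p = |c| ^ p * ∑ i : V, κ i * |f i| ^ p := by
    rw [Finset.mul_sum]
    refine Finset.sum_congr rfl fun i _ => ?_
    simp only [Pi.smul_apply, smul_eq_mul]
    rw [habs]; ring
  have h3 : ∑ i : V, μ i * |(c • f) i| ^ p = |c| ^ p * ∑ i : V, μ i * |f i| ^ p := by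
    rw [Finset.mul_sum]
    refine Finset.sum_congr rfl fun i _ => ?_
    simp only [Pi.smul_apply, smul_eq_mul]
    rw [habs]; ring
  rw [h1, h2, h3, ← mul_add, mul_div_mul_left _ _ hcp]

lemma radial_mem_sphere {μ : V → ℝ} {p : ℝ} {f : V → ℝ} (hp : p ≠ 0)
    (hD : 0 < ∑ i : V, μ i * |f i| ^ p) :
    ((∑ i : V, μ i * |f i| ^ p) ^ (-(1:ℝ)/p)) • f ∈ pSphere μ p := by
  set D := ∑ i : V, μ i * |f i| ^ p with hDdef
  set c := D ^ (-(1:ℝ)/p) with hcdef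
  have hcpos : 0 < c := Real.rpow_pos_of_pos hD _
  have hcp : c ^ p = D⁻¹ := by
    rw [hcdef, ← Real.rpow_mul hD.le, div_mul_cancel₀ _ hp, Real.rpow_neg_one]
  show ∑ i : V, μ i * |(c • f) i| ^ p = 1
  have habs : ∀ x : ℝ, |c * x| ^ p = c ^ p * |x| ^ p := fun x => by
    rw [abs_mul, abs_of_pos hcpos, Real.mul_rpow hcpos.le (abs_nonneg _)]
  have : ∑ i : V, μ i * |(c • f) i| ^ p = c ^ p * D := by
    rw [hDdef, Finset.mul_sum]
    refine Finset.sum_congr rfl fun i _ => ?_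
    simp only [Pi.smul_apply, smul_eq_mul]
    rw [habs]; ring
  rw [this, hcp, inv_mul_cancel₀ hD.ne']


lemma isCompact_of_subset_sphere {μ : V → ℝ} {p : ℝ} {B : Set (V → ℝ)} (hp : 0 < p)
    (hμ : ∀ i, 0 < μ i) (hB : B ⊆ pSphere μ p) (hcl : IsClosed B) : IsCompact B := by
  refine Metric.isCompact_of_isClosed_isBounded hcl ?_
  rw [isBounded_iff_forall_norm_le]
  refine ⟨∑ i : V, ((μ i)⁻¹) ^ (1/p), fun f hf => ?_⟩
  have key : ∀ i : V, |f i| ≤ ((μ i)⁻¹) ^ (1/p) := by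
    intro i
    have hf1 : ∑ j : V, μ j * |f j| ^ p = 1 := hB hf
    have hterm : μ i * |f i| ^ p ≤ 1 := by
      rw [← hf1]
      exact Finset.single_le_sum
        (fun j _ => mul_nonneg (hμ j).le (Real.rpow_nonneg (abs_nonneg _) _))
        (Finset.mem_univ i)
    have h2 : |f i| ^ p ≤ (μ i)⁻¹ :=
      le_of_mul_le_mul_left (by rw [mul_inv_cancel₀ (hμ i).ne']; exact hterm) (hμ i)
    calc |f i| = (|f i| ^ p) ^ (1/p) := by
          rw [← Real.rpow_mul (abs_nonneg _), mul_one_div_cancel hp.ne', Real.rpow_one]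
      _ ≤ ((μ i)⁻¹) ^ (1/p) :=
          Real.rpow_le_rpow (Real.rpow_nonneg (abs_nonneg _) _) h2 (one_div_pos.mpr hp).le
  have hC : (0:ℝ) ≤ ∑ i : V, ((μ i)⁻¹) ^ (1/p) :=
    Finset.sum_nonneg fun i _ => Real.rpow_nonneg (inv_nonneg.mpr (hμ i).le) _
  rw [pi_norm_le_iff_of_nonneg hC]
  intro i
  calc ‖f i‖ = |f i| := rfl
    _ ≤ ((μ i)⁻¹) ^ (1/p) := key i
    _ ≤ ∑ j : V, ((μ j)⁻¹) ^ (1/p) :=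
        Finset.single_le_sum (f := fun j => ((μ j)⁻¹) ^ (1/p))
          (fun j _ => Real.rpow_nonneg (inv_nonneg.mpr (hμ j).le) _) (Finset.mem_univ i)

lemma continuous_sgDenom (μ : V → ℝ) {p : ℝ} (hp : 0 < p) :
    Continuous (fun f : V → ℝ => ∑ i : V, μ i * |f i| ^ p) := by
  refine continuous_finset_sum _ fun i _ => Continuous.mul continuous_const ?_
  exact ((continuous_apply i).abs).rpow_const fun x => Or.inr hp.le

lemma continuous_sgNum (G : SimpleGraph V) (w sgn : V → V → ℝ) (κ : V → ℝ) {p : ℝ} (hp : 0 < p) :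
    Continuous (fun f : V → ℝ =>
      sgEdgeSum G (fun i j => w i j * |f i - sgn i j * f j| ^ p) +
        ∑ i : V, κ i * |f i| ^ p) := by
  refine Continuous.add ?_ ?_
  · unfold sgEdgeSum
    refine Continuous.div_const ?_ 2
    refine continuous_finset_sum _ fun i _ => continuous_finset_sum _ fun j _ => ?_
    by_cases hij : G.Adj i j
    · simp only [hij, if_true]
      refine Continuous.mul continuous_const ?_
      refine Continuous.rpow_const ?_ fun x => Or.inr hp.le
      exact ((continuous_apply i).sub (continuous_const.mul (continuous_apply j))).abs
    · simp only [hij, if_false]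
      exact continuous_const
  · refine continuous_finset_sum _ fun i _ => Continuous.mul continuous_const ?_
    exact ((continuous_apply i).abs).rpow_const fun x => Or.inr hp.le

lemma continuousOn_sgRayleigh {G : SimpleGraph V} {w sgn : V → V → ℝ} {μ κ : V → ℝ}
    {p : ℝ} {B : Set (V → ℝ)} (hp : 0 < p) (hB : B ⊆ pSphere μ p) :
    ContinuousOn (sgRayleigh G w sgn μ κ p) B := by
  unfold sgRayleigh
  refine ContinuousOn.div ((continuous_sgNum G w sgn κ hp).continuousOn) ((continuous_sgDenom μ hp).continuousOn) ?_
  intro f hf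
  have : ∑ i : V, μ i * |f i| ^ p = 1 := hB hf
  rw [this]; exact one_ne_zero


lemma map_genusFamily {μ μ' : V → ℝ} {p : ℝ} {k : ℕ} (hp : 0 < p)
    (hμ : ∀ i, 0 < μ i) (hμ' : ∀ i, 0 < μ' i)
    {B' : Set (V → ℝ)} (hB' : B' ∈ genusFamily μ' p k) :
    (fun f => ((∑ i : V, μ i * |f i| ^ p) ^ (-(1:ℝ)/p)) • f) '' B' ∈ genusFamily μ p k := by
  obtain ⟨hsub, hcl, hsym, hgen⟩ := hB'
  set Φ : (V → ℝ) → (V → ℝ) := fun f => ((∑ i : V, μ i * |f i| ^ p) ^ (-(1:ℝ)/p)) • f with hΦ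
  have hDpos : ∀ f ∈ B', 0 < ∑ i : V, μ i * |f i| ^ p :=
    fun f hf => sphere_denom_pos hμ (hsub hf)
  have hΦodd : ∀ f ∈ B', Φ (-f) = -(Φ f) := by
    intro f hf
    have hD : ∑ i : V, μ i * |(-f) i| ^ p = ∑ i : V, μ i * |f i| ^ p := by
      refine Finset.sum_congr rfl fun i _ => ?_
      simp [abs_neg]
    simp only [hΦ, hD, smul_neg]
  have hΦcont : ContinuousOn Φ B' := by
    refine ContinuousOn.smul (f := fun f : V → ℝ => (∑ i : V, μ i * |f i| ^ p) ^ (-(1:ℝ)/p)) (g := id) ?_ continuousOn_id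
    intro f hf
    refine ContinuousAt.continuousWithinAt ?_
    exact ((continuous_sgDenom μ hp).continuousAt).rpow_const (Or.inl (hDpos f hf).ne')
  have hcomp : IsCompact B' := isCompact_of_subset_sphere hp hμ' hsub hcl
  refine ⟨?_, ?_, ?_, ?_⟩
  · rintro _ ⟨g, hg, rfl⟩
    exact radial_mem_sphere hp.ne' (hDpos g hg)
  · exact (hcomp.image_of_continuousOn hΦcont).isClosed
  · rintro _ ⟨g, hg, rfl⟩
    exact ⟨-g, hsym g hg, hΦodd g hg⟩
  · intro m hm hmap
    obtain ⟨h, hc, hnz, hodd⟩ := hmap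
    refine hgen m hm ⟨h ∘ Φ, ?_, ?_, ?_⟩
    · exact hc.comp hΦcont (Set.mapsTo_image Φ B')
    · exact fun x hx => hnz _ (Set.mem_image_of_mem Φ hx)
    · intro x hx
      show h (Φ (-x)) = -(h (Φ x))
      rw [hΦodd x hx]
      exact hodd (Φ x) (Set.mem_image_of_mem Φ hx)

/-- Pointwise comparison of Rayleigh quotients on the `μ'`-sphere. -/
lemma sgRayleigh_compare {G : SimpleGraph V} {w w' sgn : V → V → ℝ} {μ μ' κ κ' : V → ℝ}
    {p : ℝ} {A a C₀ C₀' : ℝ} (hA : 0 < A) (ha : 0 < a) (hC₀ : 0 ≤ C₀) (hC₀' : 0 ≤ C₀')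
    (hwA : ∀ i j, G.Adj i j → w i j ≤ A * w' i j)
    (hw0 : ∀ i j, G.Adj i j → 0 ≤ w i j)
    (hw'0 : ∀ i j, G.Adj i j → 0 ≤ w' i j)
    (hμa : ∀ i, a * μ' i ≤ μ i)
    (hκ : ∀ i, |κ i| ≤ C₀ * μ i)
    (hκ' : ∀ i, |κ' i| ≤ C₀' * μ' i)
    {f : V → ℝ} (hf : f ∈ pSphere μ' p) :
    sgRayleigh G w sgn μ κ p f ≤
      (A/a) * sgRayleigh G w' sgn μ' κ' p f + ((A/a) * C₀' + C₀) := by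
  have hX : ∀ i : V, (0:ℝ) ≤ |f i| ^ p := fun i => Real.rpow_nonneg (abs_nonneg _) _
  have hD' : ∑ i : V, μ' i * |f i| ^ p = 1 := hf
  set E := sgEdgeSum G (fun i j => w i j * |f i - sgn i j * f j| ^ p) with hE
  set E' := sgEdgeSum G (fun i j => w' i j * |f i - sgn i j * f j| ^ p) with hE'
  set K := ∑ i : V, κ i * |f i| ^ p with hK
  set K' := ∑ i : V, κ' i * |f i| ^ p with hK'
  set D := ∑ i : V, μ i * |f i| ^ p with hD
  have hDa : a ≤ D := by
    calc a = a * ∑ i : V, μ' i * |f i| ^ p := by rw [hD', mul_one]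
      _ = ∑ i : V, a * μ' i * |f i| ^ p := by rw [Finset.mul_sum]; exact Finset.sum_congr rfl fun i _ => by ring
      _ ≤ D := Finset.sum_le_sum fun i _ => mul_le_mul_of_nonneg_right (hμa i) (hX i)
  have hDpos : (0:ℝ) < D := lt_of_lt_of_le ha hDa
  have hE0 : 0 ≤ E := sgEdgeSum_nonneg fun i j hij =>
    mul_nonneg (hw0 i j hij) (Real.rpow_nonneg (abs_nonneg _) _)
  have hE'0 : 0 ≤ E' := sgEdgeSum_nonneg fun i j hij =>
    mul_nonneg (hw'0 i j hij) (Real.rpow_nonneg (abs_nonneg _) _)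
  have hEA : E ≤ A * E' := by
    rw [hE, hE', ← sgEdgeSum_const_mul]
    refine sgEdgeSum_mono fun i j hij => ?_
    rw [← mul_assoc]
    exact mul_le_mul_of_nonneg_right (hwA i j hij) (Real.rpow_nonneg (abs_nonneg _) _)
  have hKup : K ≤ C₀ * D := by
    rw [hK, hD, Finset.mul_sum]
    refine Finset.sum_le_sum fun i _ => ?_
    rw [← mul_assoc]
    exact mul_le_mul_of_nonneg_right ((le_abs_self _).trans (hκ i)) (hX i)
  have hK'lo : -C₀' ≤ K' := by
    have : ∑ i : V, (-(C₀' * μ' i)) * |f i| ^ p ≤ K' := by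
      refine Finset.sum_le_sum fun i _ => ?_
      exact mul_le_mul_of_nonneg_right (neg_le_of_abs_le (hκ' i)) (hX i)
    calc -C₀' = -(C₀' * ∑ i : V, μ' i * |f i| ^ p) := by rw [hD', mul_one]
      _ = ∑ i : V, (-(C₀' * μ' i)) * |f i| ^ p := by
          rw [Finset.mul_sum, ← Finset.sum_neg_distrib]
          exact Finset.sum_congr rfl fun i _ => by ring
      _ ≤ K' := this
  have hR : sgRayleigh G w sgn μ κ p f = (E + K) / D := rfl
  have hR' : sgRayleigh G w' sgn μ' κ' p f = E' + K' := by
    show (E' + K') / (∑ i : V, μ' i * |f i| ^ p) = E' + K'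
    rw [hD', div_one]
  rw [hR, hR']
  have step1 : (E + K) / D ≤ E / D + C₀ := by
    rw [div_add' _ _ _ hDpos.ne']
    have h1 : E + K ≤ E + C₀ * D := by linarith
    have h2 : (0:ℝ) ≤ E + C₀ * D := by nlinarith [mul_nonneg hC₀ hDpos.le]
    exact div_le_div₀ h2 h1 hDpos le_rfl
  have step2 : E / D ≤ (A * E') / a := by
    exact div_le_div₀ (by positivity) hEA ha hDa
  have step3 : (A * E') / a = (A/a) * E' := by ring
  have step4 : (A/a) * E' ≤ (A/a) * (E' + K' + C₀') := by
    refine mul_le_mul_of_nonneg_left (by linarith) (by positivity)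
  calc (E + K) / D ≤ E / D + C₀ := step1
    _ ≤ (A * E') / a + C₀ := by linarith [step2]
    _ = (A/a) * E' + C₀ := by rw [step3]
    _ ≤ (A/a) * (E' + K' + C₀') + C₀ := by linarith [step4]
    _ = (A/a) * (E' + K') + ((A/a) * C₀' + C₀) := by ring


/-- Lower bound for the Rayleigh quotient on the sphere. -/
lemma sgRayleigh_lower {G : SimpleGraph V} {w sgn : V → V → ℝ} {μ κ : V → ℝ}
    {p : ℝ} {C₀ : ℝ}
    (hw0 : ∀ i j, G.Adj i j → 0 ≤ w i j)
    (hκ : ∀ i, |κ i| ≤ C₀ * μ i)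
    {f : V → ℝ} (hf : f ∈ pSphere μ p) :
    -C₀ ≤ sgRayleigh G w sgn μ κ p f := by
  have hX : ∀ i : V, (0:ℝ) ≤ |f i| ^ p := fun i => Real.rpow_nonneg (abs_nonneg _) _
  have hD : ∑ i : V, μ i * |f i| ^ p = 1 := hf
  have hE0 : 0 ≤ sgEdgeSum G (fun i j => w i j * |f i - sgn i j * f j| ^ p) :=
    sgEdgeSum_nonneg fun i j hij =>
      mul_nonneg (hw0 i j hij) (Real.rpow_nonneg (abs_nonneg _) _)
  have hKlo : -C₀ ≤ ∑ i : V, κ i * |f i| ^ p := by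
    have h1 : ∑ i : V, (-(C₀ * μ i)) * |f i| ^ p ≤ ∑ i : V, κ i * |f i| ^ p :=
      Finset.sum_le_sum fun i _ =>
        mul_le_mul_of_nonneg_right (neg_le_of_abs_le (hκ i)) (hX i)
    calc -C₀ = -(C₀ * ∑ i : V, μ i * |f i| ^ p) := by rw [hD, mul_one]
      _ = ∑ i : V, (-(C₀ * μ i)) * |f i| ^ p := by
          rw [Finset.mul_sum, ← Finset.sum_neg_distrib]
          exact Finset.sum_congr rfl fun i _ => by ring
      _ ≤ _ := h1
  show -C₀ ≤ (_ + _) / _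
  rw [hD, div_one]
  linarith

/-- Every element of the eigenvalue-candidate set is at least `-C₀`. -/
lemma sSup_rayleigh_lower {G : SimpleGraph V} {w sgn : V → V → ℝ} {μ κ : V → ℝ}
    {p : ℝ} {C₀ : ℝ} {k : ℕ} (hp : 0 < p) (hk : 1 ≤ k)
    (hμ : ∀ i, 0 < μ i)
    (hw0 : ∀ i j, G.Adj i j → 0 ≤ w i j)
    (hκ : ∀ i, |κ i| ≤ C₀ * μ i)
    {B : Set (V → ℝ)} (hB : B ∈ genusFamily μ p k) :
    -C₀ ≤ sSup (sgRayleigh G w sgn μ κ p '' B) := by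
  obtain ⟨hsub, hcl, hsym, hgen⟩ := hB
  obtain ⟨f₀, hf₀⟩ := nonempty_of_genusGe hgen hk
  have hbdd : BddAbove (sgRayleigh G w sgn μ κ p '' B) :=
    ((isCompact_of_subset_sphere hp hμ hsub hcl).image_of_continuousOn
      (continuousOn_sgRayleigh hp hsub)).bddAbove
  calc -C₀ ≤ sgRayleigh G w sgn μ κ p f₀ := sgRayleigh_lower hw0 hκ (hsub hf₀)
    _ ≤ sSup _ := le_csSup hbdd (Set.mem_image_of_mem _ hf₀)

/-- Lower bound for the variational eigenvalue. -/
lemma varEig_lower {G : SimpleGraph V} {w sgn : V → V → ℝ} {μ κ : V → ℝ}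
    {p : ℝ} {C₀ : ℝ} {k : ℕ} (hp : 0 < p) (hk : 1 ≤ k) (hC₀ : 0 ≤ C₀)
    (hμ : ∀ i, 0 < μ i)
    (hw0 : ∀ i j, G.Adj i j → 0 ≤ w i j)
    (hκ : ∀ i, |κ i| ≤ C₀ * μ i) :
    -C₀ ≤ varEig G w sgn μ κ p k := by
  unfold varEig
  rcases (genusFamily μ p k).eq_empty_or_nonempty with he | hne
  · rw [he, Set.image_empty, Real.sInf_empty]; linarith
  · refine le_csInf (hne.image _) ?_
    rintro b ⟨B, hB, rfl⟩
    exact sSup_rayleigh_lower hp hk hμ hw0 hκ hB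

/-- Comparison of variational eigenvalues for different weights/measures. -/
lemma varEig_compare {G : SimpleGraph V} {w w' sgn : V → V → ℝ} {μ μ' κ κ' : V → ℝ}
    {p : ℝ} {A a C₀ C₀' : ℝ} {k : ℕ} (hp : 0 < p) (hk : 1 ≤ k)
    (hA : 0 < A) (ha : 0 < a) (hC₀ : 0 ≤ C₀) (hC₀' : 0 ≤ C₀')
    (hμ : ∀ i, 0 < μ i) (hμ' : ∀ i, 0 < μ' i)
    (hwA : ∀ i j, G.Adj i j → w i j ≤ A * w' i j)
    (hw0 : ∀ i j, G.Adj i j → 0 ≤ w i j)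
    (hw'0 : ∀ i j, G.Adj i j → 0 ≤ w' i j)
    (hμa : ∀ i, a * μ' i ≤ μ i)
    (hκ : ∀ i, |κ i| ≤ C₀ * μ i)
    (hκ' : ∀ i, |κ' i| ≤ C₀' * μ' i) :
    varEig G w sgn μ κ p k ≤
      (A/a) * varEig G w' sgn μ' κ' p k + ((A/a) * C₀' + C₀) := by
  have hM : (0:ℝ) < A / a := by positivity
  rcases (genusFamily μ' p k).eq_empty_or_nonempty with he | hne
  · have hFam : genusFamily μ p k = ∅ := by
      rw [Set.eq_empty_iff_forall_notMem]
      intro B hB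
      have := map_genusFamily hp hμ' hμ hB
      rw [he] at this
      exact this
    unfold varEig
    rw [he, hFam, Set.image_empty, Set.image_empty, Real.sInf_empty]
    positivity
  · -- key inequality for each B' in the μ'-family
    have key : ∀ B' ∈ genusFamily μ' p k,
        varEig G w sgn μ κ p k ≤
          (A/a) * sSup (sgRayleigh G w' sgn μ' κ' p '' B') + ((A/a) * C₀' + C₀) := by
      intro B' hB'
      set Φ : (V → ℝ) → (V → ℝ) :=
        fun f => ((∑ i : V, μ i * |f i| ^ p) ^ (-(1:ℝ)/p)) • f with hΦ
      have hmem : Φ '' B' ∈ genusFamily μ p k := map_genusFamily hp hμ hμ' hB'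
      have hbddBelow : BddBelow
          ((fun B => sSup (sgRayleigh G w sgn μ κ p '' B)) '' genusFamily μ p k) := by
        refine ⟨-C₀, ?_⟩
        rintro b ⟨B, hB, rfl⟩
        exact sSup_rayleigh_lower hp hk hμ hw0 hκ hB
      have h1 : varEig G w sgn μ κ p k ≤ sSup (sgRayleigh G w sgn μ κ p '' (Φ '' B')) :=
        csInf_le hbddBelow (Set.mem_image_of_mem _ hmem)
      have hB'comp : IsCompact B' :=
        isCompact_of_subset_sphere hp hμ' hB'.1 hB'.2.1
      have hbddAbove' : BddAbove (sgRayleigh G w' sgn μ' κ' p '' B') :=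
        (hB'comp.image_of_continuousOn (continuousOn_sgRayleigh hp hB'.1)).bddAbove
      have hB'ne : B'.Nonempty := nonempty_of_genusGe hB'.2.2.2 hk
      have h2 : sSup (sgRayleigh G w sgn μ κ p '' (Φ '' B')) ≤
          (A/a) * sSup (sgRayleigh G w' sgn μ' κ' p '' B') + ((A/a) * C₀' + C₀) := by
        refine csSup_le ((hB'ne.image Φ).image _) ?_
        rintro b ⟨_, ⟨g, hg, rfl⟩, rfl⟩
        have hDg : 0 < ∑ i : V, μ i * |g i| ^ p := sphere_denom_pos hμ (hB'.1 hg)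
        have hc0 : ((∑ i : V, μ i * |g i| ^ p) ^ (-(1:ℝ)/p)) ≠ 0 :=
          (Real.rpow_pos_of_pos hDg _).ne'
        rw [hΦ]
        show sgRayleigh G w sgn μ κ p (_ • g) ≤ _
        rw [sgRayleigh_smul hc0]
        have h3 : sgRayleigh G w sgn μ κ p g ≤
            (A/a) * sgRayleigh G w' sgn μ' κ' p g + ((A/a) * C₀' + C₀) :=
          sgRayleigh_compare hA ha hC₀ hC₀' hwA hw0 hw'0 hμa hκ hκ' (hB'.1 hg)
        have h4 : sgRayleigh G w' sgn μ' κ' p g ≤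
            sSup (sgRayleigh G w' sgn μ' κ' p '' B') :=
          le_csSup hbddAbove' (Set.mem_image_of_mem _ hg)
        nlinarith
      exact h1.trans h2
    -- infimum over B'
    have hle : (varEig G w sgn μ κ p k - ((A/a) * C₀' + C₀)) / (A/a) ≤
        varEig G w' sgn μ' κ' p k := by
      show _ ≤ sInf _
      refine le_csInf (hne.image _) ?_
      rintro b ⟨B', hB', rfl⟩
      dsimp only
      rw [div_le_iff₀ hM]
      have h := key B' hB'
      nlinarith [h, mul_comm (sSup (sgRayleigh G w' sgn μ' κ' p '' B')) (A/a)]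
    rw [div_le_iff₀ hM] at hle
    nlinarith [hle, mul_comm (varEig G w' sgn μ' κ' p k) (A/a)]


lemma exists_edge_bound (G : SimpleGraph V) (w w' : V → V → ℝ)
    (hw : ∀ i j, G.Adj i j → 0 < w i j) (hw' : ∀ i j, G.Adj i j → 0 < w' i j) :
    ∃ A : ℝ, 0 < A ∧ ∀ i j, G.Adj i j → w i j ≤ A * w' i j := by
  set S := ∑ i : V, ∑ j : V, if G.Adj i j then w i j / w' i j else 0 with hS
  have hterm : ∀ i j : V, (0:ℝ) ≤ if G.Adj i j then w i j / w' i j else 0 := by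
    intro i j
    split_ifs with hij
    · exact div_nonneg (hw i j hij).le (hw' i j hij).le
    · exact le_rfl
  have hS0 : (0:ℝ) ≤ S :=
    Finset.sum_nonneg fun i _ => Finset.sum_nonneg fun j _ => hterm i j
  refine ⟨1 + S, by linarith, fun i j hij => ?_⟩
  have h1 : w i j / w' i j ≤ S := by
    calc w i j / w' i j = (if G.Adj i j then w i j / w' i j else 0) := by rw [if_pos hij]
      _ ≤ ∑ j' : V, if G.Adj i j' then w i j' / w' i j' else 0 :=
          Finset.single_le_sum (fun j' _ => hterm i j') (Finset.mem_univ j)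
      _ ≤ S := Finset.single_le_sum
          (f := fun i' => ∑ j' : V, if G.Adj i' j' then w i' j' / w' i' j' else 0)
          (fun i' _ => Finset.sum_nonneg fun j' _ => hterm i' j') (Finset.mem_univ i)
  rw [div_le_iff₀ (hw' i j hij)] at h1
  nlinarith [hw' i j hij, h1]

lemma exists_measure_bound [Nonempty V] (μ μ' : V → ℝ)
    (hμ : ∀ i, 0 < μ i) (hμ' : ∀ i, 0 < μ' i) :
    ∃ a : ℝ, 0 < a ∧ ∀ i, a * μ' i ≤ μ i := by
  obtain ⟨i₀, _, hmin⟩ := Finset.exists_min_image Finset.univ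
    (fun i => μ i / μ' i) Finset.univ_nonempty
  refine ⟨μ i₀ / μ' i₀, div_pos (hμ i₀) (hμ' i₀), fun i => ?_⟩
  have h1 : μ i₀ / μ' i₀ ≤ μ i / μ' i := hmin i (Finset.mem_univ i)
  rw [← le_div_iff₀ (hμ' i)]
  exact h1

lemma exists_kappa_bound (κ μ : V → ℝ) (hμ : ∀ i, 0 < μ i) :
    ∃ C : ℝ, 0 ≤ C ∧ ∀ i, |κ i| ≤ C * μ i := by
  refine ⟨∑ i : V, |κ i| / μ i, Finset.sum_nonneg fun i _ =>
    div_nonneg (abs_nonneg _) (hμ i).le, fun i => ?_⟩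
  have h1 : |κ i| / μ i ≤ ∑ j : V, |κ j| / μ j :=
    Finset.single_le_sum (f := fun j => |κ j| / μ j)
      (fun j _ => div_nonneg (abs_nonneg _) (hμ j).le) (Finset.mem_univ i)
  rw [div_le_iff₀ (hμ i)] at h1
  linarith [h1, mul_comm (∑ j : V, |κ j| / μ j) (μ i)]

lemma tendsto_two_rpow_neg : Tendsto (fun p : ℝ => (2:ℝ) ^ (-p)) atTop (𝓝 0) := by
  have heq : (fun p : ℝ => (2:ℝ) ^ (-p)) = fun p => Real.exp (Real.log 2 * (-p)) :=
    funext fun p => Real.rpow_def_of_pos two_pos _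
  rw [heq]
  exact Real.tendsto_exp_atBot.comp
    (Tendsto.const_mul_atBot (Real.log_pos (by norm_num)) tendsto_neg_atTop_atBot)


/-- Generic one-sided comparison of cut-off eigenvalues. -/
lemma cutoff_nonneg_and_le {G : SimpleGraph V} {sgn w₁ w₂ : V → V → ℝ}
    {μ₁ μ₂ κ₁ κ₂ : V → ℝ} {A₁ a₁ C₁ C₂ : ℝ} {k : ℕ} {l₁ l₂ : ℝ}
    (hA : 0 < A₁) (ha : 0 < a₁) (hC₁ : 0 ≤ C₁) (hC₂ : 0 ≤ C₂)
    (hμ₁ : ∀ i, 0 < μ₁ i) (hμ₂ : ∀ i, 0 < μ₂ i)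
    (hw₁ : ∀ i j, G.Adj i j → 0 ≤ w₁ i j) (hw₂ : ∀ i j, G.Adj i j → 0 ≤ w₂ i j)
    (hwA : ∀ i j, G.Adj i j → w₁ i j ≤ A₁ * w₂ i j)
    (hμa : ∀ i, a₁ * μ₂ i ≤ μ₁ i)
    (hκ₁ : ∀ i, |κ₁ i| ≤ C₁ * μ₁ i) (hκ₂ : ∀ i, |κ₂ i| ≤ C₂ * μ₂ i)
    (hk : 1 ≤ k)
    (h₁ : Tendsto (fun p : ℝ => (2:ℝ)^(-p) * varEig G w₁ sgn μ₁ κ₁ p k) atTop (𝓝 l₁))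
    (h₂ : Tendsto (fun p : ℝ => (2:ℝ)^(-p) * varEig G w₂ sgn μ₂ κ₂ p k) atTop (𝓝 l₂)) :
    0 ≤ l₁ ∧ l₁ ≤ (A₁/a₁) * l₂ := by
  have hM : (0:ℝ) < A₁/a₁ := by positivity
  constructor
  · have hg : Tendsto (fun p : ℝ => -C₁ * ((2:ℝ)^(-p))) atTop (𝓝 0) := by
      have h3 := tendsto_two_rpow_neg.const_mul (-C₁)
      simpa using h3
    refine le_of_tendsto_of_tendsto hg h₁ ?_
    filter_upwards [eventually_ge_atTop (1:ℝ)] with p hp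
    have hppos : (0:ℝ) < p := by linarith
    have h2p : (0:ℝ) < (2:ℝ)^(-p) := Real.rpow_pos_of_pos two_pos _
    have hlow := varEig_lower (G := G) (w := w₁) (sgn := sgn) (κ := κ₁)
      hppos hk hC₁ hμ₁ hw₁ hκ₁
    nlinarith [mul_le_mul_of_nonneg_left hlow h2p.le]
  · have hg : Tendsto (fun p : ℝ =>
        (A₁/a₁) * ((2:ℝ)^(-p) * varEig G w₂ sgn μ₂ κ₂ p k)
          + ((A₁/a₁) * C₂ + C₁) * ((2:ℝ)^(-p))) atTop (𝓝 ((A₁/a₁) * l₂)) := by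
      have h3 := (h₂.const_mul (A₁/a₁)).add
        (tendsto_two_rpow_neg.const_mul ((A₁/a₁) * C₂ + C₁))
      simpa using h3
    refine le_of_tendsto_of_tendsto h₁ hg ?_
    filter_upwards [eventually_ge_atTop (1:ℝ)] with p hp
    have hppos : (0:ℝ) < p := by linarith
    have h2p : (0:ℝ) < (2:ℝ)^(-p) := Real.rpow_pos_of_pos two_pos _
    have hcomp := varEig_compare (G := G) (sgn := sgn)
      hppos hk hA ha hC₁ hC₂ hμ₁ hμ₂ hwA hw₁ hw₂ hμa hκ₁ hκ₂
    nlinarith [mul_le_mul_of_nonneg_left hcomp h2p.le]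

/-- **Independence of the zero count from weights and measures**
(Proposition `pro:weight and measure`). The number of zero cut-off adjacency
eigenvalues of a signed graph does not depend on the edge weight and vertex measure. -/
theorem zero_cutoff_count_independent_of_weight_measure
    {V : Type} [Fintype V] [DecidableEq V] (n : ℕ) (hn : Fintype.card V = n)
    (G : SimpleGraph V) (sgn : V → V → ℝ)
    (hsgn : ∀ i j, G.Adj i j → sgn i j = 1 ∨ sgn i j = -1)
    (hsgnsymm : ∀ i j, sgn i j = sgn j i)
    (w w' : V → V → ℝ) (μ μ' κ κ' : V → ℝ)
    (hw : ∀ i j, G.Adj i j → 0 < w i j) (hwsymm : ∀ i j, w i j = w j i)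
    (hw' : ∀ i j, G.Adj i j → 0 < w' i j) (hw'symm : ∀ i j, w' i j = w' j i)
    (hμ : ∀ i, 0 < μ i) (hμ' : ∀ i, 0 < μ' i)
    (L L' : ℕ → ℝ)
    (hL : ∀ k, 1 ≤ k → k ≤ n →
      Tendsto (fun p : ℝ => (2 : ℝ) ^ (-p) * varEig G w sgn μ κ p k) atTop (𝓝 (L k)))
    (hL' : ∀ k, 1 ≤ k → k ≤ n →
      Tendsto (fun p : ℝ => (2 : ℝ) ^ (-p) * varEig G w' sgn μ' κ' p k) atTop (𝓝 (L' k))) :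
    ((Finset.Icc 1 n).filter (fun k => L k = 0)).card =
      ((Finset.Icc 1 n).filter (fun k => L' k = 0)).card := by
  rcases Nat.eq_zero_or_pos n with hn0 | hnpos
  · subst hn0
    rw [Finset.Icc_eq_empty (by omega)]
    simp
  · haveI : Nonempty V := Fintype.card_pos_iff.mp (by rw [hn]; exact hnpos)
    obtain ⟨A, hA, hwA⟩ := exists_edge_bound G w w' hw hw'
    obtain ⟨A₂, hA₂, hwA₂⟩ := exists_edge_bound G w' w hw' hw
    obtain ⟨a, ha, hμa⟩ := exists_measure_bound μ μ' hμ hμ'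
    obtain ⟨a₂, ha₂, hμa₂⟩ := exists_measure_bound μ' μ hμ' hμ
    obtain ⟨C₀, hC₀, hκb⟩ := exists_kappa_bound κ μ hμ
    obtain ⟨C₀', hC₀', hκb'⟩ := exists_kappa_bound κ' μ' hμ'
    have hw0 : ∀ i j, G.Adj i j → 0 ≤ w i j := fun i j h => (hw i j h).le
    have hw'0 : ∀ i j, G.Adj i j → 0 ≤ w' i j := fun i j h => (hw' i j h).le
    have hiff : ∀ k ∈ Finset.Icc 1 n, (L k = 0 ↔ L' k = 0) := by
      intro k hk
      rw [Finset.mem_Icc] at hk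
      obtain ⟨h01, h1⟩ := cutoff_nonneg_and_le hA ha hC₀ hC₀' hμ hμ' hw0 hw'0
        hwA hμa hκb hκb' hk.1 (hL k hk.1 hk.2) (hL' k hk.1 hk.2)
      obtain ⟨h02, h2⟩ := cutoff_nonneg_and_le hA₂ ha₂ hC₀' hC₀ hμ' hμ hw'0 hw0
        hwA₂ hμa₂ hκb' hκb hk.1 (hL' k hk.1 hk.2) (hL k hk.1 hk.2)
      have hM : (0:ℝ) < A/a := by positivity
      have hM₂ : (0:ℝ) < A₂/a₂ := by positivity
      constructor
      · intro h; rw [h] at h2; simp at h2; linarith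
      · intro h; rw [h] at h1; simp at h1; linarith
    rw [Finset.filter_congr hiff]

end
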